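/- Suppose (x, τ) is a solution of the threshold delay differential equation on [0,∞). Then for every ε > 0 there exists T ≥ 0 such that dL/γ − ε ≤ x(t) ≤ dU/γ + ε for all t ≥ T. -/

import Mathlib

/-- Absorption: every solution of the threshold delay differential
equation eventually enters any `ε`-neighbourhood of the interval `[dL/γ, dU/γ]`, where
`dL = β (v0/vU) e^{-μ a/v0} g0` and `dU = β gU vU / v0`. -/
theorem threshold_dde_absorption
    (β μ γ a v0 vU g0 gU : ℝ)
    (hβ : 0 < β) (hμ : 0 < μ) (hγ : 0 < γ) (ha : 0 < a)
    (hv0 : 0 < v0) (hv0U : v0 ≤ vU) (hg0 : 0 < g0) (hg0U : g0 ≤ gU)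
    (v g : ℝ → ℝ) (hv : Continuous v) (hg : Continuous g)
    (hvb : ∀ y, v0 ≤ v y ∧ v y ≤ vU) (hgb : ∀ y, g0 ≤ g y ∧ g y ≤ gU)
    (x τ : ℝ → ℝ) (hx : Continuous x)
    (hτpos : ∀ t, 0 ≤ t → 0 < τ t)
    (hthr : ∀ t, 0 ≤ t → (∫ s in (t - τ t)..t, v (x s)) = a)
    (hode : ∀ t, 0 ≤ t →
      HasDerivAt x
        (β * Real.exp (-μ * τ t) * (v (x t) / v (x (t - τ t))) * g (x (t - τ t))
          - γ * x t) t) :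
    ∀ ε > 0, ∃ T, 0 ≤ T ∧ ∀ t, T ≤ t →
      β * (v0 / vU) * Real.exp (-μ * (a / v0)) * g0 / γ - ε ≤ x t ∧
      x t ≤ β * gU * vU / v0 / γ + ε := by
  intro ε hε
  have hvU : 0 < vU := lt_of_lt_of_le hv0 hv0U
  have hgU : 0 < gU := lt_of_lt_of_le hg0 hg0U
  set dL : ℝ := β * (v0 / vU) * Real.exp (-μ * (a / v0)) * g0 with hdL
  set dU : ℝ := β * gU * vU / v0 with hdU
  have hdLpos : 0 < dL := by positivity
  have hdUpos : 0 < dU := by positivity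
  set f : ℝ → ℝ := fun t =>
    β * Real.exp (-μ * τ t) * (v (x t) / v (x (t - τ t))) * g (x (t - τ t)) with hfdef
  -- bound on τ
  have hτle : ∀ t, 0 ≤ t → τ t ≤ a / v0 := by
    intro t ht
    have hτt := hτpos t ht
    have h1 : t - τ t ≤ t := by linarith
    have hint : IntervalIntegrable (fun s => v (x s)) MeasureTheory.volume (t - τ t) t :=
      (hv.comp hx).intervalIntegrable _ _
    have h2 : (∫ _ in (t - τ t)..t, v0) ≤ ∫ s in (t - τ t)..t, v (x s) :=
      intervalIntegral.integral_mono_on h1 intervalIntegrable_const hint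
        (fun s _ => (hvb (x s)).1)
    rw [intervalIntegral.integral_const, hthr t ht] at h2
    have h3 : τ t * v0 ≤ a := by
      have h4 : (t - (t - τ t)) • v0 = τ t * v0 := by simp [smul_eq_mul]
      linarith [h4 ▸ h2]
    rw [le_div_iff₀ hv0]; linarith
  -- bounds on the production term
  have hfL : ∀ t, 0 ≤ t → dL ≤ f t := by
    intro t ht
    have hE : Real.exp (-μ * (a / v0)) ≤ Real.exp (-μ * τ t) :=
      Real.exp_le_exp.2 (by nlinarith [hτle t ht])
    have hQ : v0 / vU ≤ v (x t) / v (x (t - τ t)) :=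
      div_le_div₀ (le_trans hv0.le (hvb (x t)).1) (hvb (x t)).1
        (lt_of_lt_of_le hv0 (hvb (x (t - τ t))).1) (hvb (x (t - τ t))).2
    have hG : g0 ≤ g (x (t - τ t)) := (hgb _).1
    have hdL' : dL = β * Real.exp (-μ * (a / v0)) * (v0 / vU) * g0 := by rw [hdL]; ring
    simp only [hfdef, hdL']
    have h1 : 0 ≤ v0 / vU := by positivity
    gcongr
    exact mul_nonneg (mul_nonneg hβ.le (Real.exp_pos _).le)
      (div_nonneg (le_trans hv0.le (hvb _).1) (le_trans hv0.le (hvb _).1))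
  have hfU : ∀ t, 0 ≤ t → f t ≤ dU := by
    intro t ht
    have hE : Real.exp (-μ * τ t) ≤ 1 := by
      rw [Real.exp_le_one_iff]
      nlinarith [hτpos t ht]
    have hQ : v (x t) / v (x (t - τ t)) ≤ vU / v0 :=
      div_le_div₀ hvU.le (hvb (x t)).2 hv0 (hvb (x (t - τ t))).1
    have hG : g (x (t - τ t)) ≤ gU := (hgb _).2
    have hdU' : dU = β * 1 * (vU / v0) * gU := by rw [hdU]; field_simp
    have hQ0 : 0 ≤ v (x t) / v (x (t - τ t)) :=
      div_nonneg (le_trans hv0.le (hvb _).1) (le_trans hv0.le (hvb _).1)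
    have hG0 : 0 ≤ g (x (t - τ t)) := le_trans hg0.le (hgb _).1
    simp only [hfdef, hdU']
    gcongr
  -- derivative of exp(γ t)
  have hEder : ∀ t : ℝ, HasDerivAt (fun s => Real.exp (γ * s)) (Real.exp (γ * t) * γ) t := by
    intro t
    have h : HasDerivAt (fun s : ℝ => γ * s) γ t := by
      simpa using (hasDerivAt_id t).const_mul γ
    exact h.exp
  have hEc : Continuous fun s : ℝ => Real.exp (γ * s) :=
    Real.continuous_exp.comp (continuous_const.mul continuous_id)
  -- derivative of u t = exp(γ t) * x t
  have hud : ∀ t, 0 ≤ t →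
      HasDerivAt (fun s => Real.exp (γ * s) * x s) (Real.exp (γ * t) * f t) t := by
    intro t ht
    have h := (hEder t).mul (hode t ht)
    refine h.congr_deriv ?_
    simp only [hfdef]; ring
  -- lower comparison function
  have hmonoL : MonotoneOn
      (fun s => Real.exp (γ * s) * x s - dL / γ * (Real.exp (γ * s) - 1)) (Set.Ici 0) := by
    apply monotoneOn_of_hasDerivWithinAt_nonneg (f' := fun t =>
      Real.exp (γ * t) * f t - dL / γ * (Real.exp (γ * t) * γ)) (convex_Ici 0)
    · exact ((hEc.mul hx).sub (continuous_const.mul (hEc.sub continuous_const))).continuousOn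
    · intro t ht
      rw [interior_Ici] at ht
      exact (((hud t (le_of_lt ht)).sub
        (((hEder t).sub_const 1).const_mul (dL / γ)))).hasDerivWithinAt
    · intro t ht
      rw [interior_Ici] at ht
      have h1 : dL ≤ f t := hfL t (le_of_lt ht)
      have h2 : dL / γ * (Real.exp (γ * t) * γ) = dL * Real.exp (γ * t) := by
        field_simp
      rw [h2]
      have := Real.exp_pos (γ * t)
      nlinarith
  -- upper comparison function
  have hmonoU : MonotoneOn
      (fun s => dU / γ * (Real.exp (γ * s) - 1) - Real.exp (γ * s) * x s) (Set.Ici 0) := by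
    apply monotoneOn_of_hasDerivWithinAt_nonneg (f' := fun t =>
      dU / γ * (Real.exp (γ * t) * γ) - Real.exp (γ * t) * f t) (convex_Ici 0)
    · exact ((continuous_const.mul (hEc.sub continuous_const)).sub (hEc.mul hx)).continuousOn
    · intro t ht
      rw [interior_Ici] at ht
      exact ((((hEder t).sub_const 1).const_mul (dU / γ)).sub
        (hud t (le_of_lt ht))).hasDerivWithinAt
    · intro t ht
      rw [interior_Ici] at ht
      have h1 : f t ≤ dU := hfU t (le_of_lt ht)
      have h2 : dU / γ * (Real.exp (γ * t) * γ) = dU * Real.exp (γ * t) := by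
        field_simp
      rw [h2]
      have := Real.exp_pos (γ * t)
      nlinarith
  -- integral comparison inequalities
  have hLineq : ∀ t, 0 ≤ t →
      x 0 ≤ Real.exp (γ * t) * x t - dL / γ * (Real.exp (γ * t) - 1) := by
    intro t ht
    have h := hmonoL (Set.self_mem_Ici) ht ht
    simpa using h
  have hUineq : ∀ t, 0 ≤ t →
      - x 0 ≤ dU / γ * (Real.exp (γ * t) - 1) - Real.exp (γ * t) * x t := by
    intro t ht
    have h := hmonoU (Set.self_mem_Ici) ht ht
    simpa using h
  -- choose T
  set C : ℝ := |x 0| + dL / γ + dU / γ + 1 with hC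
  have hCpos : 0 < C := by positivity
  refine ⟨max 0 (Real.log (C / ε) / γ), le_max_left _ _, ?_⟩
  intro t htT
  have ht0 : 0 ≤ t := le_trans (le_max_left _ _) htT
  have hexpT : C / ε ≤ Real.exp (γ * t) := by
    have h1 : Real.log (C / ε) / γ ≤ t := le_trans (le_max_right _ _) htT
    have h2 : Real.log (C / ε) ≤ γ * t := by
      rw [div_le_iff₀ hγ] at h1; linarith
    calc C / ε = Real.exp (Real.log (C / ε)) := (Real.exp_log (by positivity)).symm
      _ ≤ Real.exp (γ * t) := Real.exp_le_exp.2 h2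
  have hεE : |x 0| + dL / γ + dU / γ + 1 ≤ ε * Real.exp (γ * t) := by
    rw [div_le_iff₀ hε] at hexpT; rw [hC] at hexpT; linarith
  have hEpos : (0:ℝ) < Real.exp (γ * t) := Real.exp_pos _
  have habs1 : -|x 0| ≤ x 0 := neg_abs_le _
  have habs2 : x 0 ≤ |x 0| := le_abs_self _
  have hdLγ : 0 ≤ dL / γ := by positivity
  have hdUγ : 0 ≤ dU / γ := by positivity
  constructor
  · -- lower bound
    have h1 := hLineq t ht0
    have key : (dL / γ - ε) * Real.exp (γ * t) ≤ x t * Real.exp (γ * t) := by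
      nlinarith [h1, hεE]
    linarith [le_of_mul_le_mul_right key hEpos]
  · have h1 := hUineq t ht0
    have key : x t * Real.exp (γ * t) ≤ (dU / γ + ε) * Real.exp (γ * t) := by
      nlinarith [h1, hεE]
    linarith [le_of_mul_le_mul_right key hEpos]
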